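/- Let A be an m × n matrix over ℤ. Exactly one of the following holds: (1) there exists x ∈ ℤⁿ with every coordinate of x positive and every coordinate of Ax at most 0; (2) there exists y ∈ ℤᵐ with every coordinate of y nonnegative such that every coordinate of Aᵀy is nonnegative and Aᵀy ≠ 0. -/

import Mathlib

section AlternativeIntAux
open Finset Matrix


lemma farkas_cone {α : Type} [Fintype α] :
    ∀ (k : ℕ) (v : Fin k → α → ℚ) (b : α → ℚ),
      (∃ c : Fin k → ℚ, (∀ i, 0 ≤ c i) ∧ b = ∑ i, c i • v i) ∨
      (∃ y : α → ℚ, (∀ i, 0 ≤ y ⬝ᵥ v i) ∧ y ⬝ᵥ b < 0) := by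
  intro k
  induction k with
  | zero =>
    intro v b
    by_cases hb : b = 0
    · exact Or.inl ⟨0, fun i => le_refl 0, by simp [hb]⟩
    · refine Or.inr ⟨-b, fun i => i.elim0, ?_⟩
      have h : 0 < b ⬝ᵥ b :=
        lt_of_le_of_ne (Finset.sum_nonneg fun a _ => mul_self_nonneg _)
          (Ne.symm ((dotProduct_self_eq_zero (v := b)).not.mpr hb))
      simpa [neg_dotProduct] using neg_neg_of_pos h
  | succ k ih =>
    intro v b
    set w := v (Fin.last k) with hw
    set v' : Fin k → α → ℚ := fun i => v i.castSucc with hv'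
    rcases ih v' b with ⟨c, hc, hcb⟩ | ⟨y, hyv, hyb⟩
    · refine Or.inl ⟨Fin.snoc c 0, ?_, ?_⟩
      · intro i
        induction i using Fin.lastCases with
        | last => simp
        | cast j => simpa using hc j
      · rw [Fin.sum_univ_castSucc]
        simpa [hv'] using hcb
    · set t := y ⬝ᵥ w with ht
      by_cases htn : 0 ≤ t
      · refine Or.inr ⟨y, ?_, hyb⟩
        intro i
        induction i using Fin.lastCases with
        | last => exact htn
        | cast j => exact hyv j
      push_neg at htn
      have ht0 : t ≠ 0 := ne_of_lt htn
      set P : (α → ℚ) → (α → ℚ) := fun u => u - ((y ⬝ᵥ u) / t) • w with hP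
      rcases ih (fun i => P (v' i)) (P b) with ⟨c, hc, hcb⟩ | ⟨z, hzv, hzb⟩
      · set clast := (y ⬝ᵥ b) / t - ∑ i, c i * ((y ⬝ᵥ v' i) / t) with hcl
        have hcl0 : 0 ≤ clast := by
          have h1 : 0 < (y ⬝ᵥ b) / t := div_pos_of_neg_of_neg hyb htn
          have h2 : ∀ i ∈ univ, c i * ((y ⬝ᵥ v' i) / t) ≤ 0 := fun i _ =>
            mul_nonpos_of_nonneg_of_nonpos (hc i)
              (div_nonpos_of_nonneg_of_nonpos (hyv i) (le_of_lt htn))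
          have h3 := Finset.sum_nonpos h2
          rw [hcl]; linarith
        refine Or.inl ⟨Fin.snoc c clast, ?_, ?_⟩
        · intro i
          induction i using Fin.lastCases with
          | last => simpa using hcl0
          | cast j => simpa using hc j
        · rw [Fin.sum_univ_castSucc]
          simp only [Fin.snoc_castSucc, Fin.snoc_last]
          have expand : ∑ i, c i • P (v' i)
              = ∑ i, c i • v' i - (∑ i, c i * ((y ⬝ᵥ v' i) / t)) • w := by
            simp only [hP, smul_sub, Finset.sum_sub_distrib, smul_smul]
            rw [← Finset.sum_smul]
          rw [expand] at hcb
          have hb' : b - ((y ⬝ᵥ b) / t) • w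
              = ∑ i, c i • v' i - (∑ i, c i * ((y ⬝ᵥ v' i) / t)) • w := hcb
          rw [hcl, sub_smul]
          conv_lhs => rw [eq_add_of_sub_eq hb']
          abel
      · set u := z - ((z ⬝ᵥ w) / t) • y with hu
        have key : ∀ q : α → ℚ, u ⬝ᵥ q = z ⬝ᵥ P q := by
          intro q
          rw [hu, hP, sub_dotProduct, smul_dotProduct, dotProduct_sub, dotProduct_smul,
            smul_eq_mul, smul_eq_mul]
          field_simp
        refine Or.inr ⟨u, ?_, ?_⟩
        · intro i
          induction i using Fin.lastCases with
          | last =>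
            have huw : u ⬝ᵥ w = 0 := by
              rw [hu, sub_dotProduct, smul_dotProduct, smul_eq_mul]
              field_simp
              simp [← ht]
            rw [← hw, huw]
          | cast j => rw [show v j.castSucc = v' j from rfl, key]; exact hzv j
        · rw [key]; exact hzb

lemma exists_int_scale {p : ℕ} (x : Fin p → ℚ) :
    ∃ (d : ℤ) (x' : Fin p → ℤ), 0 < d ∧ ∀ j, (x' j : ℚ) = (d : ℚ) * x j := by
  set d : ℤ := ∏ j, ((x j).den : ℤ) with hd
  have hdpos : 0 < d := Finset.prod_pos fun j _ => by positivity
  refine ⟨d, fun j => (x j).num * (d / ((x j).den : ℤ)), hdpos, fun j => ?_⟩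
  have hdvd : ((x j).den : ℤ) ∣ d := Finset.dvd_prod_of_mem _ (mem_univ j)
  push_cast [Int.cast_div_charZero hdvd]
  rw [show ((x j).num:ℚ) * ((d:ℚ) / ((x j).den:ℚ))
      = (d:ℚ) * (((x j).num:ℚ) / ((x j).den:ℚ)) by ring, Rat.num_div_den]


private lemma alternative_int_not_both (m n : ℕ) (A : Matrix (Fin m) (Fin n) ℤ) :
    ¬ ((∃ x : Fin n → ℤ, (∀ j, 0 < x j) ∧ ∀ i, A.mulVec x i ≤ 0) ∧
       (∃ y : Fin m → ℤ, (∀ i, 0 ≤ y i) ∧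
        (∀ j, 0 ≤ A.transpose.mulVec y j) ∧ A.transpose.mulVec y ≠ 0)) := by
  rintro ⟨⟨x, hx, hAx⟩, ⟨y, hy, hAty, hne0⟩⟩
  have key : ∑ j, A.transpose.mulVec y j * x j = ∑ i, y i * A.mulVec x i := by
    simp only [Matrix.mulVec, dotProduct, Matrix.transpose_apply, Finset.sum_mul,
      Finset.mul_sum]
    rw [Finset.sum_comm]
    exact Finset.sum_congr rfl fun i _ => Finset.sum_congr rfl fun j _ => by ring
  have h1 : 0 < ∑ j, A.transpose.mulVec y j * x j := by
    obtain ⟨j0, hj0⟩ : ∃ j, A.transpose.mulVec y j ≠ 0 := by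
      by_contra h; push_neg at h; exact hne0 (funext h)
    refine Finset.sum_pos' (fun j _ => mul_nonneg (hAty j) (le_of_lt (hx j)))
      ⟨j0, Finset.mem_univ j0, ?_⟩
    exact mul_pos (lt_of_le_of_ne (hAty j0) (Ne.symm hj0)) (hx j0)
  have h2 : ∑ i, y i * A.mulVec x i ≤ 0 :=
    Finset.sum_nonpos fun i _ => mul_nonpos_of_nonneg_of_nonpos (hy i) (hAx i)
  rw [key] at h1
  exact absurd h1 (not_lt.mpr h2)


private lemma alternative_int_or (m n : ℕ) (A : Matrix (Fin m) (Fin n) ℤ) :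
    (∃ x : Fin n → ℤ, (∀ j, 0 < x j) ∧ ∀ i, A.mulVec x i ≤ 0) ∨
    (∃ y : Fin m → ℤ, (∀ i, 0 ≤ y i) ∧
        (∀ j, 0 ≤ A.transpose.mulVec y j) ∧ A.transpose.mulVec y ≠ 0) := by
  classical
  set W : (Fin n ⊕ (Fin m ⊕ Fin n)) → (Fin m ⊕ Fin n) → ℚ := Sum.elim
    (fun j => Sum.elim (fun i => (A i j : ℚ)) (fun j' => if j = j' then -1 else 0))
    (fun a a' => if a = a' then 1 else 0) with hW
  set b : (Fin m ⊕ Fin n) → ℚ := Sum.elim (fun _ => 0) (fun _ => -1) with hb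
  set e := Fintype.equivFin (Fin n ⊕ (Fin m ⊕ Fin n)) with he
  rcases farkas_cone (Fintype.card (Fin n ⊕ (Fin m ⊕ Fin n))) (fun i => W (e.symm i)) b with
    ⟨c, hc, hcb⟩ | ⟨y, hyW, hyb⟩
  · left
    set xq : Fin n → ℚ := fun j => c (e (Sum.inl j)) with hxq
    have hsum : ∀ a : Fin m ⊕ Fin n,
        b a = (∑ j : Fin n, xq j * W (Sum.inl j) a) + c (e (Sum.inr a)) := by
      intro a
      have h1 : b a = ∑ i, c i * W (e.symm i) a := by
        rw [hcb]; simp [Finset.sum_apply]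
      have h2 : ∑ i, c i * W (e.symm i) a = ∑ p, c (e p) * W p a := by
        rw [← Equiv.sum_comp e.symm (fun p => c (e p) * W p a)]
        exact Finset.sum_congr rfl fun i _ => by rw [Equiv.apply_symm_apply]
      rw [h1, h2, Fintype.sum_sum_type]
      congr 1
      simp [hW]
    -- from the (inr j) components : xq j ≥ 1
    have hx1 : ∀ j, 1 ≤ xq j := by
      intro j
      have := hsum (Sum.inr j)
      simp [hW, hb, Finset.sum_ite_eq', mul_ite] at this
      have hc' := hc (e (Sum.inr (Sum.inr j)))
      linarith
    -- from the (inl i) components : ∑ j A i j * xq j ≤ 0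
    have hAx : ∀ i, ∑ j, (A i j : ℚ) * xq j ≤ 0 := by
      intro i
      have := hsum (Sum.inl i)
      simp [hW, hb] at this
      have hc' := hc (e (Sum.inr (Sum.inl i)))
      have : ∑ j, xq j * (A i j : ℚ) ≤ 0 := by linarith
      calc ∑ j, (A i j : ℚ) * xq j = ∑ j, xq j * (A i j : ℚ) :=
            Finset.sum_congr rfl fun j _ => mul_comm _ _
        _ ≤ 0 := this
    obtain ⟨d, x', hd, hx'⟩ := exists_int_scale xq
    have hdq : (0:ℚ) < (d:ℚ) := by exact_mod_cast hd
    refine ⟨x', fun j => ?_, fun i => ?_⟩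
    · have h : (0:ℚ) < (x' j : ℚ) := by
        rw [hx' j]; exact mul_pos hdq (lt_of_lt_of_le one_pos (hx1 j))
      exact_mod_cast h
    · have h : ((A.mulVec x' i : ℤ) : ℚ) ≤ 0 := by
        have hcast : ((A.mulVec x' i : ℤ) : ℚ) = (d:ℚ) * ∑ j, (A i j : ℚ) * xq j := by
          push_cast [Matrix.mulVec, dotProduct]
          rw [Finset.mul_sum]
          exact Finset.sum_congr rfl fun j _ => by rw [hx' j]; ring
        rw [hcast]
        exact mul_nonpos_of_nonneg_of_nonpos (le_of_lt hdq) (hAx i)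
      exact_mod_cast h
  · right
    have hyW' : ∀ p, 0 ≤ y ⬝ᵥ W p := by
      intro p
      have := hyW (e p)
      rwa [Equiv.symm_apply_apply] at this
    set S : Fin n → ℚ := fun j => ∑ i, y (Sum.inl i) * (A i j : ℚ) with hS
    have hynn : ∀ a, 0 ≤ y a := by
      intro a
      have := hyW' (Sum.inr a)
      simpa [hW, dotProduct, mul_ite, Finset.sum_ite_eq'] using this
    have hSz : ∀ j, y (Sum.inr j) ≤ S j := by
      intro j
      have := hyW' (Sum.inl j)
      simp [hW, dotProduct, Fintype.sum_sum_type, mul_ite, Finset.sum_ite_eq', hS]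
        at this
      linarith
    have hzpos : 0 < ∑ j, y (Sum.inr j) := by
      have := hyb
      simp [hb, dotProduct, Fintype.sum_sum_type] at this
      linarith
    obtain ⟨d, y', hd, hy'⟩ := exists_int_scale (fun i => y (Sum.inl i))
    have hdq : (0:ℚ) < (d:ℚ) := by exact_mod_cast hd
    have hcast : ∀ j, ((A.transpose.mulVec y' j : ℤ) : ℚ) = (d:ℚ) * S j := by
      intro j
      push_cast [Matrix.mulVec, dotProduct, Matrix.transpose_apply]
      rw [hS, Finset.mul_sum]
      exact Finset.sum_congr rfl fun i _ => by rw [hy' i]; ring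
    refine ⟨y', fun i => ?_, fun j => ?_, ?_⟩
    · have h : (0:ℚ) ≤ (y' i : ℚ) := by
        rw [hy' i]; exact mul_nonneg (le_of_lt hdq) (hynn (Sum.inl i))
      exact_mod_cast h
    · have h : (0:ℚ) ≤ ((A.transpose.mulVec y' j : ℤ) : ℚ) := by
        rw [hcast j]
        exact mul_nonneg (le_of_lt hdq) (le_trans (hynn (Sum.inr j)) (hSz j))
      exact_mod_cast h
    · intro h0
      have hsum0 : ∑ j, A.transpose.mulVec y' j = 0 := by
        rw [h0]; simp
      have hpos : (0:ℚ) < ∑ j, ((A.transpose.mulVec y' j : ℤ) : ℚ) := by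
        have h1 : ∀ j ∈ univ, (d:ℚ) * y (Sum.inr j) ≤ ((A.transpose.mulVec y' j : ℤ) : ℚ) :=
          fun j _ => by rw [hcast j]; exact mul_le_mul_of_nonneg_left (hSz j) (le_of_lt hdq)
        have h2 : (0:ℚ) < ∑ j, (d:ℚ) * y (Sum.inr j) := by
          rw [← Finset.mul_sum]; exact mul_pos hdq hzpos
        exact lt_of_lt_of_le h2 (Finset.sum_le_sum h1)
      rw [show ∑ j, ((A.transpose.mulVec y' j : ℤ) : ℚ) = ((∑ j, A.transpose.mulVec y' j : ℤ) : ℚ)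
        by push_cast; ring, hsum0] at hpos
      simp at hpos


end AlternativeIntAux

/-- **Lemma (theorem of the alternative over ℤ).**
Let `A` be an `m × n` matrix over `ℤ`. Exactly one of the following holds:
(1) for some `x ∈ ℤⁿ` with `x > 0` (coordinate-wise), `A x ≤ 0`;
(2) for some `y ∈ ℤᵐ` with `y ≥ 0`, `Aᵀ y ≩ 0` (i.e. `Aᵀ y ≥ 0` and `Aᵀ y ≠ 0`). -/
theorem alternative_int (m n : ℕ) (A : Matrix (Fin m) (Fin n) ℤ) :
    Xor'
      (∃ x : Fin n → ℤ, (∀ j, 0 < x j) ∧ ∀ i, A.mulVec x i ≤ 0)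
      (∃ y : Fin m → ℤ, (∀ i, 0 ≤ y i) ∧
        (∀ j, 0 ≤ A.transpose.mulVec y j) ∧ A.transpose.mulVec y ≠ 0) := by
  have hne := alternative_int_not_both m n A
  rcases alternative_int_or m n A with h | h
  · exact Or.inl ⟨h, fun h' => hne ⟨h, h'⟩⟩
  · exact Or.inr ⟨h, fun h' => hne ⟨h', h⟩⟩
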